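/- First-order qPCA expansion: let M ∈ ℂ^{N×N} be Hermitian, let ρ₁ ∈ ℂ^{N×N} be the matrix with every entry equal to 1/N, and let ρ₂ ∈ ℂ^{N×N} be arbitrary. Then the matrix-valued function f(t) := tr₁( exp(−i t S_M) · (ρ₁ ⊗ ρ₂) · exp(i t S_M) ) satisfies f(0) = ρ₂ and has derivative at t = 0 equal to −(i/N)·[M, ρ₂] = −(i/N)(Mρ₂ − ρ₂M); i.e., f(t) = ρ₂ − i(t/N)[M,ρ₂] + O(t²) as t → 0. -/

import Mathlib

section ExpEntry

attribute [local instance] Matrix.linftyOpNormedRing Matrix.linftyOpNormedAlgebra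

/-- Entrywise derivative of `t ↦ exp (t • A)` at `0`. This is a statement about scalar-valued
functions, hence independent of any choice of matrix norm. -/
lemma hasDerivAt_exp_entry {n : Type*} [Fintype n] [DecidableEq n]
    (A : Matrix n n ℂ) (i j : n) :
    HasDerivAt (fun t : ℝ => NormedSpace.exp (t • A) i j) (A i j) 0 := by
  have h : HasDerivAt (fun t : ℝ => NormedSpace.exp (t • A))
      (NormedSpace.exp ((0 : ℝ) • A) * A) 0 :=
    _root_.hasDerivAt_exp_smul_const A (0 : ℝ)
  have h' : HasDerivAt (fun t : ℝ => NormedSpace.exp (t • A)) A 0 := by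
    simpa using h
  let evalLM : Matrix n n ℂ →ₗ[ℝ] ℂ :=
    { toFun := fun X => X i j
      map_add' := fun _ _ => rfl
      map_smul' := fun _ _ => rfl }
  have := evalLM.toContinuousLinearMap.hasFDerivAt.comp_hasDerivAt 0 h'
  exact this

end ExpEntry

open scoped BigOperators Matrix Kronecker

attribute [local instance] Matrix.normedAddCommGroup Matrix.normedSpace

/-- The SWAP-like operator `S_M = ∑_{ℓ,j} M(ℓ,j) |j⟩⟨ℓ| ⊗ |ℓ⟩⟨j|` associated with
`M ∈ ℂ^{N × N}`: its entry at row `(a,b)` and column `(c,d)` is `M(b,a)` if `c = b`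
and `d = a`, and `0` otherwise. -/
def swapOp {N : ℕ} (M : Matrix (Fin N) (Fin N) ℂ) :
    Matrix (Fin N × Fin N) (Fin N × Fin N) ℂ :=
  fun p q => if q.1 = p.2 ∧ q.2 = p.1 then M p.2 p.1 else 0

/-- The partial trace over the first tensor factor:
`(tr₁ T)(b,d) = ∑_a T((a,b),(a,d))`. -/
noncomputable def ptrace1 {N : ℕ} (T : Matrix (Fin N × Fin N) (Fin N × Fin N) ℂ) :
    Matrix (Fin N) (Fin N) ℂ :=
  fun b d => ∑ a : Fin N, T (a, b) (a, d)

/-- The density matrix of the uniform superposition pure state: every entry `1/N`. -/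
noncomputable def unifRho (N : ℕ) : Matrix (Fin N) (Fin N) ℂ :=
  Matrix.of fun _ _ => (1 : ℂ) / N

lemma ptrace1_add {N : ℕ} (X Y : Matrix (Fin N × Fin N) (Fin N × Fin N) ℂ) :
    ptrace1 (X + Y) = ptrace1 X + ptrace1 Y := by
  funext b d
  simp [ptrace1, Finset.sum_add_distrib]

lemma ptrace1_smul {N : ℕ} (c : ℂ) (X : Matrix (Fin N × Fin N) (Fin N × Fin N) ℂ) :
    ptrace1 (c • X) = c • ptrace1 X := by
  funext b d
  simp [ptrace1, Finset.mul_sum]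

/-- `ptrace1` as a linear map. -/
noncomputable def ptrace1L (N : ℕ) :
    Matrix (Fin N × Fin N) (Fin N × Fin N) ℂ →ₗ[ℝ] Matrix (Fin N) (Fin N) ℂ where
  toFun := ptrace1
  map_add' := ptrace1_add
  map_smul' c T := by
    funext b d
    simp [ptrace1, Finset.mul_sum, Matrix.smul_apply]

lemma csmul_eq_rsmul {N : ℕ} (c : ℂ) (t : ℝ)
    (X : Matrix (Fin N × Fin N) (Fin N × Fin N) ℂ) :
    (c * (t : ℂ)) • X = t • (c • X) := by
  rw [mul_comm, ← smul_smul]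
  norm_num [Complex.real_smul]

/-- A matrix-valued function all of whose entries are differentiable is differentiable
(w.r.t. the entrywise sup norm, which is the pi norm). -/
lemma hasDerivAt_of_entries {n m : Type*} [Fintype n] [Fintype m] [DecidableEq n]
    [DecidableEq m] (f : ℝ → Matrix n m ℂ) (D : Matrix n m ℂ) (t : ℝ)
    (h : ∀ i j, HasDerivAt (fun s => f s i j) (D i j) t) :
    HasDerivAt f D t := by
  have hstd : ∀ (i : n) (j : m) (c : ℂ),
      Matrix.single i j c = c • Matrix.single i j (1 : ℂ) := fun i j c => by
    rw [Matrix.smul_single, smul_eq_mul, mul_one]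
  have hf : f = fun s => ∑ i : n, ∑ j : m, f s i j • Matrix.single i j (1 : ℂ) := by
    funext s
    conv_lhs => rw [Matrix.matrix_eq_sum_single (f s)]
    exact Finset.sum_congr rfl fun i _ => Finset.sum_congr rfl fun j _ => hstd i j _
  have hD : D = ∑ i : n, ∑ j : m, D i j • Matrix.single i j (1 : ℂ) := by
    conv_lhs => rw [Matrix.matrix_eq_sum_single D]
    exact Finset.sum_congr rfl fun i _ => Finset.sum_congr rfl fun j _ => hstd i j _
  rw [hf, hD]
  refine HasDerivAt.fun_sum fun i _ => HasDerivAt.fun_sum fun j _ => ?_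
  exact (h i j).smul_const _

lemma ptrace1_swap_mul {N : ℕ} (M ρ₂ : Matrix (Fin N) (Fin N) ℂ) :
    ptrace1 (swapOp M * (unifRho N ⊗ₖ ρ₂)) = ((1 : ℂ) / N) • (M * ρ₂) := by
  funext b d
  simp only [ptrace1, Matrix.mul_apply, Matrix.smul_apply, Matrix.kroneckerMap_apply,
    unifRho, Matrix.of_apply, smul_eq_mul]
  rw [Finset.mul_sum]
  refine Finset.sum_congr rfl fun a _ => ?_
  rw [Finset.sum_eq_single ((b, a) : Fin N × Fin N)]
  · simp [swapOp]; ring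
  · rintro ⟨c, e⟩ _ h
    have : ¬(c = b ∧ e = a) := by
      rintro ⟨rfl, rfl⟩; exact h rfl
    simp [swapOp, this]
  · simp

lemma ptrace1_mul_swap {N : ℕ} (M ρ₂ : Matrix (Fin N) (Fin N) ℂ) :
    ptrace1 ((unifRho N ⊗ₖ ρ₂) * swapOp M) = ((1 : ℂ) / N) • (ρ₂ * M) := by
  funext b d
  simp only [ptrace1, Matrix.mul_apply, Matrix.smul_apply, Matrix.kroneckerMap_apply,
    unifRho, Matrix.of_apply, smul_eq_mul]
  rw [Finset.mul_sum]
  refine Finset.sum_congr rfl fun a _ => ?_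
  rw [Finset.sum_eq_single ((d, a) : Fin N × Fin N)]
  · simp [swapOp]; ring
  · rintro ⟨c, e⟩ _ h
    have : ¬(a = e ∧ d = c) := by
      rintro ⟨rfl, rfl⟩; exact h rfl
    simp [swapOp, this]
  · simp

/-- Multiplication `(X, Y) ↦ X * P * Y` as iterated continuous linear maps
(w.r.t. the entrywise sup norm). -/
noncomputable def mulCLM {N : ℕ} (P : Matrix (Fin N × Fin N) (Fin N × Fin N) ℂ) :
    Matrix (Fin N × Fin N) (Fin N × Fin N) ℂ →L[ℝ]
      Matrix (Fin N × Fin N) (Fin N × Fin N) ℂ →L[ℝ]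
        Matrix (Fin N × Fin N) (Fin N × Fin N) ℂ :=
  LinearMap.toContinuousLinearMap
    { toFun := fun X => LinearMap.toContinuousLinearMap
        { toFun := fun Y => X * P * Y
          map_add' := fun Y Z => by simp [Matrix.mul_add]
          map_smul' := fun c Y => by simp [Matrix.mul_smul] }
      map_add' := fun X Z => by
        ext Y : 1
        simp [Matrix.add_mul]
      map_smul' := fun c X => by
        ext Y : 1
        simp [Matrix.smul_mul] }

theorem qpca_first_order {N : ℕ} (M : Matrix (Fin N) (Fin N) ℂ) (hM : M.IsHermitian)
    (ρ₂ : Matrix (Fin N) (Fin N) ℂ) :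
    (fun t : ℝ =>
        ptrace1 (NormedSpace.exp ((-Complex.I * (t : ℂ)) • swapOp M) *
          (unifRho N ⊗ₖ ρ₂) *
          NormedSpace.exp ((Complex.I * (t : ℂ)) • swapOp M))) 0 = ρ₂ ∧
    HasDerivAt
      (fun t : ℝ =>
        ptrace1 (NormedSpace.exp ((-Complex.I * (t : ℂ)) • swapOp M) *
          (unifRho N ⊗ₖ ρ₂) *
          NormedSpace.exp ((Complex.I * (t : ℂ)) • swapOp M)))
      ((-(Complex.I / N)) • (M * ρ₂ - ρ₂ * M)) 0 := by
  rcases Nat.eq_zero_or_pos N with hN | hN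
  · subst hN
    refine ⟨Subsingleton.elim _ _, ?_⟩
    have : (fun t : ℝ =>
        ptrace1 (NormedSpace.exp ((-Complex.I * (t : ℂ)) • swapOp M) *
          (unifRho 0 ⊗ₖ ρ₂) *
          NormedSpace.exp ((Complex.I * (t : ℂ)) • swapOp M)))
        = fun _ => ((-(Complex.I / ((0 : ℕ) : ℂ))) • (M * ρ₂ - ρ₂ * M)) := by
      funext t; exact Subsingleton.elim _ _
    rw [this, show ((-(Complex.I / ((0 : ℕ) : ℂ))) • (M * ρ₂ - ρ₂ * M))
        = (0 : Matrix (Fin 0) (Fin 0) ℂ) from Subsingleton.elim _ _]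
    exact hasDerivAt_const _ _
  have hNC : (N : ℂ) ≠ 0 := Nat.cast_ne_zero.mpr hN.ne'
  set S := swapOp M with hS
  set P := unifRho N ⊗ₖ ρ₂ with hP
  have hptr : ptrace1 P = ρ₂ := by
    funext b d
    simp only [ptrace1, hP, Matrix.kroneckerMap_apply, unifRho, Matrix.of_apply]
    rw [← Finset.sum_mul]
    simp [hNC]
  constructor
  · simp only [Complex.ofReal_zero, mul_zero, zero_smul, NormedSpace.exp_zero,
      Matrix.one_mul, Matrix.mul_one, hptr]
  · set A₁ : Matrix (Fin N × Fin N) (Fin N × Fin N) ℂ := (-Complex.I) • S with hA₁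
    set A₂ : Matrix (Fin N × Fin N) (Fin N × Fin N) ℂ := Complex.I • S with hA₂
    have hfun : (fun t : ℝ =>
        ptrace1 (NormedSpace.exp ((-Complex.I * (t : ℂ)) • S) * P *
          NormedSpace.exp ((Complex.I * (t : ℂ)) • S)))
        = fun t : ℝ =>
          ptrace1L N (mulCLM P (NormedSpace.exp (t • A₁)) (NormedSpace.exp (t • A₂))) := by
      funext t
      rw [csmul_eq_rsmul, csmul_eq_rsmul]
      rfl
    rw [hfun]
    have h1 : HasDerivAt (fun t : ℝ => NormedSpace.exp (t • A₁)) A₁ 0 :=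
      hasDerivAt_of_entries _ _ _ fun i j => hasDerivAt_exp_entry A₁ i j
    have h2 : HasDerivAt (fun t : ℝ => NormedSpace.exp (t • A₂)) A₂ 0 :=
      hasDerivAt_of_entries _ _ _ fun i j => hasDerivAt_exp_entry A₂ i j
    letI : NormedAddCommGroup (Matrix (Fin N × Fin N) (Fin N × Fin N) ℂ →L[ℝ]
        Matrix (Fin N × Fin N) (Fin N × Fin N) ℂ) := ContinuousLinearMap.toNormedAddCommGroup
    letI : NormedSpace ℝ (Matrix (Fin N × Fin N) (Fin N × Fin N) ℂ →L[ℝ]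
        Matrix (Fin N × Fin N) (Fin N × Fin N) ℂ) := ContinuousLinearMap.toNormedSpace
    have hc := (mulCLM P).hasFDerivAt.comp_hasDerivAt (f := fun t : ℝ => NormedSpace.exp (t • A₁)) (0 : ℝ) h1
    have h3 := hc.clm_apply h2
    have h4 := (ptrace1L N).toContinuousLinearMap.hasFDerivAt.comp_hasDerivAt (0 : ℝ) h3
    have hval : (ptrace1L N).toContinuousLinearMap
        ((mulCLM P) A₁ (NormedSpace.exp ((0:ℝ) • A₂)) +
          (mulCLM P) (NormedSpace.exp ((0:ℝ) • A₁)) A₂)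
        = (-(Complex.I / N)) • (M * ρ₂ - ρ₂ * M) := by
      have hzero : (NormedSpace.exp ((0:ℝ) • A₁) = (1 : Matrix (Fin N × Fin N) (Fin N × Fin N) ℂ))
          ∧ NormedSpace.exp ((0:ℝ) • A₂) = 1 := by
        constructor <;> rw [zero_smul, NormedSpace.exp_zero]
      have hsum : (mulCLM P) A₁ (NormedSpace.exp ((0:ℝ) • A₂)) +
          (mulCLM P) (NormedSpace.exp ((0:ℝ) • A₁)) A₂
          = (-Complex.I) • (S * P) + Complex.I • (P * S) := by
        show A₁ * P * NormedSpace.exp ((0:ℝ) • A₂) +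
          NormedSpace.exp ((0:ℝ) • A₁) * P * A₂ = _
        rw [hzero.1, hzero.2, Matrix.mul_one, Matrix.one_mul, hA₁, hA₂,
          Matrix.smul_mul, Matrix.mul_smul]
      show ptrace1 _ = _
      rw [hsum, ptrace1_add, ptrace1_smul, ptrace1_smul, hS, hP, ptrace1_swap_mul,
        ptrace1_mul_swap, smul_smul, smul_smul, smul_sub, sub_eq_add_neg, ← neg_smul]
      congr 1
      · congr 1; ring
      · congr 1; ring
    have h4' : HasDerivAt (fun t : ℝ =>
        ptrace1L N (mulCLM P (NormedSpace.exp (t • A₁)) (NormedSpace.exp (t • A₂))))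
        ((ptrace1L N).toContinuousLinearMap
          ((mulCLM P) A₁ (NormedSpace.exp ((0:ℝ) • A₂)) +
            (mulCLM P) (NormedSpace.exp ((0:ℝ) • A₁)) A₂)) 0 := h4
    rw [hval] at h4'
    exact h4'
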